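/- Over {a<b<c}, let w = a b^α c b^β a b^γ c b^δ a with α, β, γ, δ ≥ 1. If no word in the M-equivalence class of w contains ac or ca as a factor, then α = δ = 1. -/

import Mathlib

open List

/-- Number of occurrences of `v` as a scattered subsequence of `w`. -/
def scount {α : Type*} [DecidableEq α] (w v : List α) : ℕ := w.sublists.count v

/-- The ternary ordered alphabet {a < b < c}. -/
inductive ABC | a | b | c
deriving DecidableEq

open ABC

/-- M-equivalence over the ordered alphabet {a < b < c}. -/
def MEq3 (w w' : List ABC) : Prop :=
  scount w [a] = scount w' [a] ∧ scount w [b] = scount w' [b] ∧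
  scount w [c] = scount w' [c] ∧ scount w [a, b] = scount w' [a, b] ∧
  scount w [b, c] = scount w' [b, c] ∧ scount w [a, b, c] = scount w' [a, b, c]

/-- Projection onto {a, c}: erase all b's. -/
def projAC (w : List ABC) : List ABC := w.filter (· ≠ b)

abbrev A (k : ℕ) : List ABC := List.replicate k a
abbrev B (k : ℕ) : List ABC := List.replicate k b
abbrev C (k : ℕ) : List ABC := List.replicate k c

/- ### auxiliary scount calculus -/

lemma count_bridge {α : Type*} [DecidableEq α] (v : List α) (L : List (List α)) :
    @List.count (List α) instBEq v L = @List.count (List α) instBEqOfDecidableEq v L := by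
  rw [@count_eq_countP _ instBEq, @count_eq_countP _ instBEqOfDecidableEq]
  refine countP_congr fun u _ => ?_
  simp only [beq_iff_eq]

lemma scount_eq_sublists' {α : Type*} [DecidableEq α] (w v : List α) :
    scount w v = w.sublists'.count v := by
  unfold scount
  rw [@count_eq_countP _ instBEq, @count_eq_countP _ instBEq]
  exact (w.sublists_perm_sublists').countP_eq _

lemma scount_empty {α : Type*} [DecidableEq α] (w : List α) : scount w [] = 1 := by
  induction w with
  | nil => rfl
  | cons x w ih =>
    rw [scount_eq_sublists'] at *
    rw [sublists'_cons, count_append, ih]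
    have : count ([] : List α) (map (cons x) w.sublists') = 0 := by
      refine count_eq_zero.2 fun h => ?_
      obtain ⟨u, _, hu⟩ := mem_map.1 h
      cases hu
    omega

lemma scount_nil_cons {α : Type*} [DecidableEq α] (y : α) (v : List α) :
    scount ([] : List α) (y :: v) = 0 := by
  simp [scount]

lemma scount_cons {α : Type*} [DecidableEq α] (x y : α) (w v : List α) :
    scount (x :: w) (y :: v) =
      scount w (y :: v) + if y = x then scount w v else 0 := by
  rw [scount_eq_sublists', scount_eq_sublists', sublists'_cons, count_append]
  congr 1
  · split
    · next h =>
      subst h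
      rw [scount_eq_sublists', count_bridge, count_bridge]
      exact @count_map_of_injective _ _ instBEqOfDecidableEq _ instBEqOfDecidableEq _ _ _ (fun u u' h => by injection h) _
    · next h =>
      refine count_eq_zero.2 fun hmem => ?_
      obtain ⟨u, _, hu⟩ := mem_map.1 hmem
      injection hu with h1 _
      exact h h1.symm

/- specialized simp lemmas over ABC -/

lemma sc_a_a (w : List ABC) : scount (a :: w) [a] = scount w [a] + 1 := by
  rw [scount_cons]; simp [scount_empty]
lemma sc_a_b (w : List ABC) : scount (a :: w) [b] = scount w [b] := by
  rw [scount_cons]; simp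
lemma sc_a_c (w : List ABC) : scount (a :: w) [c] = scount w [c] := by
  rw [scount_cons]; simp
lemma sc_a_ab (w : List ABC) : scount (a :: w) [a, b] = scount w [a, b] + scount w [b] := by
  rw [scount_cons]; simp
lemma sc_a_bc (w : List ABC) : scount (a :: w) [b, c] = scount w [b, c] := by
  rw [scount_cons]; simp
lemma sc_a_abc (w : List ABC) :
    scount (a :: w) [a, b, c] = scount w [a, b, c] + scount w [b, c] := by
  rw [scount_cons]; simp

lemma sc_c_a (w : List ABC) : scount (c :: w) [a] = scount w [a] := by
  rw [scount_cons]; simp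
lemma sc_c_b (w : List ABC) : scount (c :: w) [b] = scount w [b] := by
  rw [scount_cons]; simp
lemma sc_c_c (w : List ABC) : scount (c :: w) [c] = scount w [c] + 1 := by
  rw [scount_cons]; simp [scount_empty]
lemma sc_c_ab (w : List ABC) : scount (c :: w) [a, b] = scount w [a, b] := by
  rw [scount_cons]; simp
lemma sc_c_bc (w : List ABC) : scount (c :: w) [b, c] = scount w [b, c] := by
  rw [scount_cons]; simp
lemma sc_c_abc (w : List ABC) : scount (c :: w) [a, b, c] = scount w [a, b, c] := by
  rw [scount_cons]; simp

lemma sc_b_a (w : List ABC) : scount (b :: w) [a] = scount w [a] := by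
  rw [scount_cons]; simp
lemma sc_b_b (w : List ABC) : scount (b :: w) [b] = scount w [b] + 1 := by
  rw [scount_cons]; simp [scount_empty]
lemma sc_b_c (w : List ABC) : scount (b :: w) [c] = scount w [c] := by
  rw [scount_cons]; simp
lemma sc_b_ab (w : List ABC) : scount (b :: w) [a, b] = scount w [a, b] := by
  rw [scount_cons]; simp
lemma sc_b_bc (w : List ABC) : scount (b :: w) [b, c] = scount w [b, c] + scount w [c] := by
  rw [scount_cons]; simp
lemma sc_b_abc (w : List ABC) : scount (b :: w) [a, b, c] = scount w [a, b, c] := by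
  rw [scount_cons]; simp

/- block lemmas for B k -/

lemma sc_B_a (k : ℕ) (w : List ABC) : scount (B k ++ w) [a] = scount w [a] := by
  induction k with
  | zero => rfl
  | succ k ih => rw [B, replicate_succ, cons_append, sc_b_a]; exact ih

lemma sc_B_b (k : ℕ) (w : List ABC) : scount (B k ++ w) [b] = scount w [b] + k := by
  induction k with
  | zero => rfl
  | succ k ih => rw [B, replicate_succ, cons_append, sc_b_b, ih]; omega

lemma sc_B_c (k : ℕ) (w : List ABC) : scount (B k ++ w) [c] = scount w [c] := by
  induction k with
  | zero => rfl
  | succ k ih => rw [B, replicate_succ, cons_append, sc_b_c]; exact ih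

lemma sc_B_ab (k : ℕ) (w : List ABC) : scount (B k ++ w) [a, b] = scount w [a, b] := by
  induction k with
  | zero => rfl
  | succ k ih => rw [B, replicate_succ, cons_append, sc_b_ab]; exact ih

lemma sc_B_bc (k : ℕ) (w : List ABC) :
    scount (B k ++ w) [b, c] = scount w [b, c] + k * scount w [c] := by
  induction k with
  | zero => simp
  | succ k ih =>
    rw [B, replicate_succ, cons_append, sc_b_bc, ih, sc_B_c]
    ring

lemma sc_B_abc (k : ℕ) (w : List ABC) : scount (B k ++ w) [a, b, c] = scount w [a, b, c] := by
  induction k with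
  | zero => rfl
  | succ k ih => rw [B, replicate_succ, cons_append, sc_b_abc]; exact ih

lemma sc_Bt_a (k : ℕ) : scount (B k) [a] = 0 := by
  simpa [scount_nil_cons] using sc_B_a k []
lemma sc_Bt_b (k : ℕ) : scount (B k) [b] = k := by
  simpa [scount_nil_cons] using sc_B_b k []
lemma sc_Bt_c (k : ℕ) : scount (B k) [c] = 0 := by
  simpa [scount_nil_cons] using sc_B_c k []
lemma sc_Bt_ab (k : ℕ) : scount (B k) [a, b] = 0 := by
  simpa [scount_nil_cons] using sc_B_ab k []
lemma sc_Bt_bc (k : ℕ) : scount (B k) [b, c] = 0 := by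
  simpa [scount_nil_cons] using sc_B_bc k []
lemma sc_Bt_abc (k : ℕ) : scount (B k) [a, b, c] = 0 := by
  simpa [scount_nil_cons] using sc_B_abc k []

theorem stmt_12 (α β γ δ : ℕ)
    (hα : 1 ≤ α) (hβ : 1 ≤ β) (hγ : 1 ≤ γ) (hδ : 1 ≤ δ)
    (hnd : ∀ w' : List ABC,
      MEq3 ([a] ++ B α ++ [c] ++ B β ++ [a] ++ B γ ++ [c] ++ B δ ++ [a]) w' →
      ¬ [a, c] <:+: w' ∧ ¬ [c, a] <:+: w') :
    α = 1 ∧ δ = 1 := by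
  by_contra hcon
  have hor : 2 ≤ α ∨ 2 ≤ δ := by omega
  have hcases : 2 * α ≤ δ + 3 * (α / 2) ∨ 2 * δ ≤ α + 3 * (δ / 2) := by omega
  rcases hcases with hc | hc
  · -- family F3 : witness with factor "ac"
    obtain ⟨x0, hx1, hx2⟩ : ∃ x0, 2 * x0 ≤ α ∧ 2 * α ≤ δ + 3 * x0 :=
      ⟨α / 2, by omega, hc⟩
    set W : List ABC :=
      B x0 ++ [a] ++ [c] ++ B (2 * α + β - 4 * x0) ++ [a] ++ B (γ + 2 * x0) ++ [c] ++
        B (δ + 3 * x0 - 2 * α) ++ [a] ++ B (α - 2 * x0) with hW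
    have hmeq : MEq3 ([a] ++ B α ++ [c] ++ B β ++ [a] ++ B γ ++ [c] ++ B δ ++ [a]) W := by
      refine ⟨?_, ?_, ?_, ?_, ?_, ?_⟩ <;>
        simp only [hW, List.append_assoc, List.cons_append, List.nil_append, List.singleton_append, List.append_nil,
          sc_a_a, sc_a_b, sc_a_c, sc_a_ab, sc_a_bc, sc_a_abc,
          sc_c_a, sc_c_b, sc_c_c, sc_c_ab, sc_c_bc, sc_c_abc,
          sc_B_a, sc_B_b, sc_B_c, sc_B_ab, sc_B_bc, sc_B_abc,
          sc_Bt_a, sc_Bt_b, sc_Bt_c, sc_Bt_ab, sc_Bt_bc, sc_Bt_abc,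
          scount_nil_cons] <;> omega
    have hfac : [a, c] <:+: W := by
      refine ⟨B x0, B (2 * α + β - 4 * x0) ++ [a] ++ B (γ + 2 * x0) ++ [c] ++
        B (δ + 3 * x0 - 2 * α) ++ [a] ++ B (α - 2 * x0), ?_⟩
      simp [hW, List.append_assoc]
    exact (hnd W hmeq).1 hfac
  · -- family F2 : witness with factor "ca"
    obtain ⟨t, ht1, ht2⟩ : ∃ t, 2 * t ≤ δ ∧ 2 * δ ≤ α + 3 * t :=
      ⟨δ / 2, by omega, hc⟩
    set W : List ABC :=
      B (δ - 2 * t) ++ [a] ++ B (α + 3 * t - 2 * δ) ++ [c] ++ B (β + 2 * t) ++ [a] ++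
        B (γ + 2 * δ - 4 * t) ++ [c] ++ [a] ++ B t with hW
    have hmeq : MEq3 ([a] ++ B α ++ [c] ++ B β ++ [a] ++ B γ ++ [c] ++ B δ ++ [a]) W := by
      refine ⟨?_, ?_, ?_, ?_, ?_, ?_⟩ <;>
        simp only [hW, List.append_assoc, List.cons_append, List.nil_append, List.singleton_append, List.append_nil,
          sc_a_a, sc_a_b, sc_a_c, sc_a_ab, sc_a_bc, sc_a_abc,
          sc_c_a, sc_c_b, sc_c_c, sc_c_ab, sc_c_bc, sc_c_abc,
          sc_B_a, sc_B_b, sc_B_c, sc_B_ab, sc_B_bc, sc_B_abc,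
          sc_Bt_a, sc_Bt_b, sc_Bt_c, sc_Bt_ab, sc_Bt_bc, sc_Bt_abc,
          scount_nil_cons] <;> omega
    have hfac : [c, a] <:+: W := by
      refine ⟨B (δ - 2 * t) ++ [a] ++ B (α + 3 * t - 2 * δ) ++ [c] ++ B (β + 2 * t) ++ [a] ++
        B (γ + 2 * δ - 4 * t), B t, ?_⟩
      simp [hW, List.append_assoc]
    exact (hnd W hmeq).2 hfac
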